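/- Let G be a connected graph, let s, t be distinct vertices with d = dist_G(s, t), and let a < i < b be indices in {0, …, d} such that D_a = {u} and D_b = {w} are singletons. Then every v ∈ D_i satisfies dist_G(u, v) = i − a, dist_G(v, w) = b − i, and dist_G(u, w) = b − a; in particular, v is an internal vertex of a shortest u-w path in G. -/
import Mathlib


/-- `D_i`: the vertices at distance `i` from `s` and distance `d - i` from `t`,
where `d = dist_G(s, t)`. -/
def SimpleGraph.levelSet {V : Type*} (G : SimpleGraph V) (s t : V) (i : ℕ) : Set V :=
  {v | G.dist s v = i ∧ G.dist v t = G.dist s t - i}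

private lemma dist_getVert_le {V : Type*} {G : SimpleGraph V} (hG : G.Connected) {x y : V} (p : G.Walk x y)
    (j : ℕ) : G.dist x (p.getVert j) ≤ j := by
  induction p generalizing j with
  | nil => simp [SimpleGraph.Walk.getVert, SimpleGraph.dist_self]
  | @cons x x' y h q ih =>
    cases j with
    | zero => simp [SimpleGraph.Walk.getVert]
    | succ j =>
      rw [SimpleGraph.Walk.getVert_cons_succ]
      calc G.dist x (q.getVert j) ≤ G.dist x x' + G.dist x' (q.getVert j) :=
            hG.dist_triangle
        _ ≤ 1 + j := by
            have h1 : G.dist x x' ≤ 1 := by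
              simpa using G.dist_le (SimpleGraph.Walk.cons h SimpleGraph.Walk.nil)
            exact Nat.add_le_add h1 (ih j)
        _ = j + 1 := by omega

private lemma getVert_dist_le {V : Type*} {G : SimpleGraph V} (hG : G.Connected) {x y : V} (p : G.Walk x y)
    {j : ℕ} (hj : j ≤ p.length) : G.dist (p.getVert j) y ≤ p.length - j := by
  have := dist_getVert_le hG p.reverse (p.length - j)
  rw [SimpleGraph.Walk.getVert_reverse] at this
  have hjj : p.length - (p.length - j) = j := by omega
  rw [hjj] at this
  rwa [G.dist_comm]

/-- let `G` be connected, `s ≠ t`, `d = dist_G(s, t)`, and let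
`a < i < b ≤ d` be indices with `D_a = {u}` and `D_b = {w}` singletons.  Then every
`v ∈ D_i` satisfies `dist_G(u, v) = i - a`, `dist_G(v, w) = b - i` and
`dist_G(u, w) = b - a`; in particular `v` is an internal vertex of a shortest
`u`-`w` path of `G`. -/
theorem stmt12 {V : Type*} (G : SimpleGraph V) (hG : G.Connected) (s t : V) (hst : s ≠ t)
    (a i b : ℕ) (hai : a < i) (hib : i < b) (hbd : b ≤ G.dist s t)
    (u w : V) (hDa : G.levelSet s t a = {u}) (hDb : G.levelSet s t b = {w}) :
    ∀ v ∈ G.levelSet s t i,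
      G.dist u v = i - a ∧ G.dist v w = b - i ∧ G.dist u w = b - a ∧
      ∃ P : G.Walk u w, P.IsPath ∧ P.length = G.dist u w ∧
        v ∈ P.support ∧ v ≠ u ∧ v ≠ w := by
  intro v hv
  obtain ⟨hsv, hvt⟩ := hv
  set d := G.dist s t with hd
  have hid : i ≤ d := le_of_lt (lt_of_lt_of_le hib hbd)
  -- facts about u and w
  have hu : u ∈ G.levelSet s t a := by rw [hDa]; rfl
  have hw : w ∈ G.levelSet s t b := by rw [hDb]; rfl
  obtain ⟨hsu, hut⟩ := hu
  obtain ⟨hsw, hwt⟩ := hw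
  -- shortest walks s-v and v-t
  obtain ⟨q, hq⟩ := hG.exists_walk_length_eq_dist s v
  obtain ⟨r, hr⟩ := hG.exists_walk_length_eq_dist v t
  rw [hsv] at hq
  rw [hvt] at hr
  set p := q.append r with hp
  have hpl : p.length = d := by
    rw [hp, SimpleGraph.Walk.length_append, hq, hr]; omega
  -- each vertex of p is at exact distances
  have key : ∀ j ≤ d, G.dist s (p.getVert j) = j ∧ G.dist (p.getVert j) t = d - j := by
    intro j hj
    have h1 : G.dist s (p.getVert j) ≤ j := dist_getVert_le hG p j
    have h2 : G.dist (p.getVert j) t ≤ d - j := by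
      have := getVert_dist_le hG p (j := j) (by omega)
      rwa [hpl] at this
    have h3 : d ≤ G.dist s (p.getVert j) + G.dist (p.getVert j) t := hG.dist_triangle
    omega
  have hqa : p.getVert a = q.getVert a := by
    rw [hp, SimpleGraph.Walk.getVert_append, if_pos (by omega : a < q.length)]
  have hrb : p.getVert b = r.getVert (b - i) := by
    rw [hp, SimpleGraph.Walk.getVert_append, if_neg (by omega : ¬ b < q.length), hq]
  -- p.getVert a = u
  have hua : q.getVert a = u := by
    have hmem : p.getVert a ∈ G.levelSet s t a := key a (by omega)
    rw [hDa] at hmem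
    rw [← hqa]; exact hmem
  have hwb : r.getVert (b - i) = w := by
    have hmem : p.getVert b ∈ G.levelSet s t b := key b hbd
    rw [hDb] at hmem
    rw [← hrb]; exact hmem
  -- distance bounds
  have huv_le : G.dist u v ≤ i - a := by
    have := getVert_dist_le hG q (j := a) (by omega)
    rwa [hua, hq] at this
  have hvw_le : G.dist v w ≤ b - i := by
    have := dist_getVert_le hG r (b - i)
    rwa [hwb] at this
  have huv_ge : i ≤ a + G.dist u v := by
    have : G.dist s v ≤ G.dist s u + G.dist u v := hG.dist_triangle
    rw [hsv, hsu] at this; omega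
  have hvw_ge : b ≤ i + G.dist v w := by
    have : G.dist s w ≤ G.dist s v + G.dist v w := hG.dist_triangle
    rw [hsw, hsv] at this; omega
  have huv : G.dist u v = i - a := by omega
  have hvw : G.dist v w = b - i := by omega
  have huw_le : G.dist u w ≤ b - a := by
    have : G.dist u w ≤ G.dist u v + G.dist v w := hG.dist_triangle
    omega
  have huw_ge : b ≤ a + G.dist u w := by
    have : G.dist s w ≤ G.dist s u + G.dist u w := hG.dist_triangle
    rw [hsw, hsu] at this; omega
  have huw : G.dist u w = b - a := by omega
  refine ⟨huv, hvw, huw, ?_⟩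
  obtain ⟨P1, hP1⟩ := hG.exists_walk_length_eq_dist u v
  obtain ⟨P2, hP2⟩ := hG.exists_walk_length_eq_dist v w
  refine ⟨P1.append P2, ?_, ?_, ?_, ?_, ?_⟩
  · apply SimpleGraph.Walk.isPath_of_length_eq_dist
    rw [SimpleGraph.Walk.length_append, hP1, hP2, huv, hvw, huw]; omega
  · rw [SimpleGraph.Walk.length_append, hP1, hP2, huv, hvw, huw]; omega
  · rw [SimpleGraph.Walk.mem_support_append_iff]
    exact Or.inl P1.end_mem_support
  · intro hvu
    rw [hvu] at hsv
    rw [hsv] at hsu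
    omega
  · intro hvw'
    rw [hvw'] at hsv
    rw [hsv] at hsw
    omega
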